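/- Let v ∈ ℝ^n be an eigenvector of the transition matrix M with eigenvalue λ (i.e., Mv = λv) satisfying the orthogonality condition 𝟙^T Π v = 0. Then for every t ∈ ℝ, the autocovariance matrix satisfies B(t) v = exp(−t(1−λ)) Π v; that is, v solves the generalized eigenvalue problem B(t)v = μ Π v with generalized eigenvalue μ = exp(−t(1−λ)). -/

import Mathlib

open Matrix

lemma exp_mulVec_eigen {n : ℕ} (N : Matrix (Fin n) (Fin n) ℝ) (v : Fin n → ℝ) (mu : ℝ)
    (h : N.mulVec v = mu • v) :
    (NormedSpace.exp N).mulVec v = Real.exp mu • v := by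
  letI : NormedRing (Matrix (Fin n) (Fin n) ℝ) := Matrix.linftyOpNormedRing
  letI : NormedAlgebra ℝ (Matrix (Fin n) (Fin n) ℝ) := Matrix.linftyOpNormedAlgebra
  have hpow : ∀ k : ℕ, (N ^ k).mulVec v = mu ^ k • v := by
    intro k
    induction k with
    | zero => simp
    | succ k ih =>
      rw [pow_succ', pow_succ', ← Matrix.mulVec_mulVec, ih, Matrix.mulVec_smul, h,
        smul_smul, mul_comm]
  have hsum : Summable fun k : ℕ => (((Nat.factorial k : ℝ)))⁻¹ • N ^ k :=
    NormedSpace.expSeries_summable' (𝕂 := ℝ) N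
  let f : Matrix (Fin n) (Fin n) ℝ →ₗ[ℝ] (Fin n → ℝ) :=
    { toFun := fun X => X.mulVec v
      map_add' := fun X Y => Matrix.add_mulVec X Y v
      map_smul' := fun c X => Matrix.smul_mulVec c X v }
  have hf : Continuous f := f.continuous_of_finiteDimensional
  have key : (NormedSpace.exp N).mulVec v
      = ∑' k : ℕ, ((((Nat.factorial k : ℝ)))⁻¹ • N ^ k).mulVec v := by
    rw [NormedSpace.exp_eq_tsum ℝ]
    exact (hsum.hasSum.map f hf).tsum_eq.symm
  rw [key]
  have : ∀ k : ℕ, ((((Nat.factorial k : ℝ)))⁻¹ • N ^ k).mulVec v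
      = ((((Nat.factorial k : ℝ)))⁻¹ * mu ^ k) • v := by
    intro k
    rw [Matrix.smul_mulVec, hpow, smul_smul]
  simp_rw [this]
  rw [Summable.tsum_smul_const (by simpa [smul_eq_mul] using NormedSpace.expSeries_summable' (𝕂 := ℝ) mu)]
  congr 1
  rw [Real.exp_eq_exp_ℝ]
  rw [NormedSpace.exp_eq_tsum ℝ]
  simp only [smul_eq_mul]


/-- If `v` is an eigenvector of the transition matrix `M = D⁻¹A` with
eigenvalue `λ` and satisfies `𝟙ᵀ Π v = 0`, then for every `t`,
`B(t) v = exp(−t(1−λ)) Π v`. -/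
theorem stmt_0 (n : ℕ) (A : Matrix (Fin n) (Fin n) ℝ)
    (hAsymm : A.IsSymm) (hAnonneg : ∀ i j, 0 ≤ A i j)
    (d : Fin n → ℝ) (hd : ∀ i, d i = ∑ j, A i j) (hdpos : ∀ i, 0 < d i)
    (m : ℝ) (hm : m = (∑ i, ∑ j, A i j) / 2)
    (M : Matrix (Fin n) (Fin n) ℝ) (hM : M = (Matrix.diagonal d)⁻¹ * A)
    (Pi : Matrix (Fin n) (Fin n) ℝ) (hPi : Pi = (2 * m)⁻¹ • Matrix.diagonal d)
    (P : ℝ → Matrix (Fin n) (Fin n) ℝ)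
    (hP : ∀ t, P t = NormedSpace.exp ((-t) • ((1 : Matrix (Fin n) (Fin n) ℝ) - M)))
    (B : ℝ → Matrix (Fin n) (Fin n) ℝ)
    (hB : ∀ t, B t = Pi * P t -
      Matrix.vecMulVec (fun i => d i / (2 * m)) (fun j => d j / (2 * m)))
    (v : Fin n → ℝ) (lam : ℝ) (hv : M.mulVec v = lam • v)
    (horth : ∑ i, (d i / (2 * m)) * v i = 0) (t : ℝ) :
    (B t).mulVec v = Real.exp (-t * (1 - lam)) • Pi.mulVec v := by
  have h2 : (Matrix.vecMulVec (fun i => d i / (2 * m))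
      (fun j => d j / (2 * m))).mulVec v = 0 := by
    ext i
    simp only [Matrix.mulVec, Matrix.vecMulVec_apply, dotProduct]
    show ∑ x, d i / (2 * m) * (d x / (2 * m)) * v x = 0
    simp_rw [mul_assoc]
    rw [← Finset.mul_sum, horth, mul_zero]
  have hN : ((-t) • ((1 : Matrix (Fin n) (Fin n) ℝ) - M)).mulVec v
      = (-t * (1 - lam)) • v := by
    rw [Matrix.smul_mulVec, Matrix.sub_mulVec, Matrix.one_mulVec, hv]
    ext i
    simp
    ring
  have hexp := exp_mulVec_eigen _ v _ hN
  rw [hB t, Matrix.sub_mulVec, h2, sub_zero, ← Matrix.mulVec_mulVec, hP t, hexp,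
    Matrix.mulVec_smul]
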